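/- Let E be a finite ground set, f : 2^E → ℝ_{≥0} a non-negative monotone submodular set function, and Y = {y_1, y_2, y_3} ⊆ E a set of three distinct elements ordered by greedy marginal values, i.e., f({y_1}) ≥ f({y}) for all y ∈ Y and f_{{y_1}}({y_2}) ≥ f_{{y_1}}({y}) for all y ∈ Y ∖ {y_1}. Then f({y_1, y_2}) ≥ (2/3)·f(Y). -/

import Mathlib

open Finset

variable {α : Type*}

/-- A set function `f` is submodular on ground set `E`. -/
def SubmodularOn [DecidableEq α] (E : Finset α) (f : Finset α → ℝ) : Prop :=
  ∀ A B : Finset α, A ⊆ B → B ⊆ E → ∀ e ∈ E, e ∉ B →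
    f (insert e B) - f B ≤ f (insert e A) - f A

/-- A set function `f` is monotone on ground set `E`. -/
def MonotoneOnSets (E : Finset α) (f : Finset α → ℝ) : Prop :=
  ∀ S T : Finset α, S ⊆ T → T ⊆ E → f S ≤ f T

/-- A set function `f` is non-negative on ground set `E`. -/
def NonnegOn (E : Finset α) (f : Finset α → ℝ) : Prop :=
  ∀ S : Finset α, S ⊆ E → 0 ≤ f S

/-- Total weight of a set. -/
def wt (w : α → ℝ) (S : Finset α) : ℝ := ∑ e ∈ S, w e

/-- Marginal value `f_A(S) = f(A ∪ S) - f(A)`. -/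
def marginal [DecidableEq α] (f : Finset α → ℝ) (A S : Finset α) : ℝ := f (A ∪ S) - f A

/-- A greedy execution on the MSK instance `(E, f, w, W)`: an ordering `e_1, …, e_n`
of the elements of `E` (here `order`, 0-indexed) together with sets
`sol 0 = ∅ ⊆ sol 1 ⊆ … ⊆ sol n` such that at every step the considered element maximizes
the marginal density among the remaining elements, and it is added iff it fits. -/
structure GreedyExec [DecidableEq α] (E : Finset α) (f : Finset α → ℝ) (w : α → ℝ)
    (W : ℝ) where
  order : List α
  nodup : order.Nodup
  ground : order.toFinset = E
  sol : ℕ → Finset α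
  sol_zero : sol 0 = ∅
  greedy_max : ∀ (i : ℕ) (hi : i < order.length), ∀ e ∈ order.drop i,
    marginal f (sol i) {e} / w e ≤
      marginal f (sol i) {order.get ⟨i, hi⟩} / w (order.get ⟨i, hi⟩)
  step_add : ∀ (i : ℕ) (hi : i < order.length),
    wt w (sol i) + w (order.get ⟨i, hi⟩) ≤ W →
      sol (i + 1) = insert (order.get ⟨i, hi⟩) (sol i)
  step_skip : ∀ (i : ℕ) (hi : i < order.length),
    W < wt w (sol i) + w (order.get ⟨i, hi⟩) → sol (i + 1) = sol i

/-- The output of a greedy execution. -/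
def GreedyExec.out [DecidableEq α] {E : Finset α} {f : Finset α → ℝ} {w : α → ℝ} {W : ℝ}
    (g : GreedyExec E f w W) : Finset α := g.sol g.order.length

/-- if `Y = {y₁, y₂, y₃}` consists of three distinct elements ordered
by greedy marginal values, then `f({y₁, y₂}) ≥ (2/3)·f(Y)`. -/
theorem two_of_three_greedy_bound [DecidableEq α] (E : Finset α) (f : Finset α → ℝ)
    (hf0 : NonnegOn E f) (hmono : MonotoneOnSets E f) (hsub : SubmodularOn E f)
    (y₁ y₂ y₃ : α) (h12 : y₁ ≠ y₂) (h13 : y₁ ≠ y₃) (h23 : y₂ ≠ y₃)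
    (hY : ({y₁, y₂, y₃} : Finset α) ⊆ E)
    (hfirst : ∀ y ∈ ({y₁, y₂, y₃} : Finset α), f {y} ≤ f {y₁})
    (hsecond : ∀ y ∈ ({y₁, y₂, y₃} : Finset α) \ {y₁},
      marginal f {y₁} {y} ≤ marginal f {y₁} {y₂}) :
    (2 / 3 : ℝ) * f {y₁, y₂, y₃} ≤ f {y₁, y₂} := by
  have hy1E : y₁ ∈ E := hY (by simp)
  have hy2E : y₂ ∈ E := hY (by simp)
  have hy3E : y₃ ∈ E := hY (by simp)
  have h12E : ({y₁, y₂} : Finset α) ⊆ E := by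
    intro x hx; simp at hx; rcases hx with h | h <;> subst h <;> assumption
  have h1E : ({y₁} : Finset α) ⊆ E := by
    intro x hx; simp at hx; subst hx; assumption
  -- submodularity: f(Y) - f{y1,y2} ≤ f{y1,y3} - f{y1}
  have hs1 : f (insert y₃ ({y₁, y₂} : Finset α)) - f {y₁, y₂}
      ≤ f (insert y₃ ({y₁} : Finset α)) - f {y₁} := by
    apply hsub {y₁} {y₁, y₂} (by intro x hx; simp at hx; simp [hx]) h12E y₃ hy3E
    simp [Ne.symm h13, Ne.symm h23]
  have e1 : insert y₃ ({y₁, y₂} : Finset α) = {y₁, y₂, y₃} := by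
    ext x; simp; tauto
  have e2 : insert y₃ ({y₁} : Finset α) = {y₁, y₃} := by
    ext x; simp; tauto
  rw [e1, e2] at hs1
  -- second greedy: marginal f {y1} {y3} ≤ marginal f {y1} {y2}
  have hg : marginal f {y₁} {y₃} ≤ marginal f {y₁} {y₂} :=
    hsecond y₃ (by simp [h23, Ne.symm h13])
  have u3 : ({y₁} : Finset α) ∪ {y₃} = {y₁, y₃} := by ext x; simp
  have u2 : ({y₁} : Finset α) ∪ {y₂} = {y₁, y₂} := by ext x; simp
  rw [marginal, marginal, u3, u2] at hg
  -- submodularity: f{y1,y2} - f{y1} ≤ f{y2} - f∅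
  have hs2 : f (insert y₂ ({y₁} : Finset α)) - f {y₁}
      ≤ f (insert y₂ (∅ : Finset α)) - f ∅ := by
    apply hsub ∅ {y₁} (by simp) h1E y₂ hy2E (by simp [Ne.symm h12])
  have e3 : insert y₂ ({y₁} : Finset α) = {y₁, y₂} := by ext x; simp; tauto
  rw [e3, insert_empty_eq] at hs2
  have hf2 : f {y₂} ≤ f {y₁} := hfirst y₂ (by simp)
  have hfe : 0 ≤ f ∅ := hf0 ∅ (by simp)
  linarith
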